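/- Let X be a finite set with |X| = B ≥ 1, G a finite set, and Bad ⊆ X × G such that for every x ∈ X, |{g : Bad(x,g)}| ≤ b·|G| with 0 < b < 1. Then there exist m ≤ ⌈log B / log(1/b)⌉ + 1 elements g₁,…,g_m ∈ G such that every x ∈ X has some gᵢ with ¬Bad(x,gᵢ). -/

import Mathlib

open Finset

lemma stmt4_avg {X G : Type*} [Fintype X] [Fintype G] [Nonempty G]
    (Bad : X → G → Prop) [∀ x g, Decidable (Bad x g)]
    (b : ℝ)
    (hbad : ∀ x : X,
      ((univ.filter fun g : G => Bad x g).card : ℝ) ≤ b * (Fintype.card G : ℝ))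
    (S : Finset X) :
    ∃ g : G, ((S.filter fun x => Bad x g).card : ℝ) ≤ b * S.card := by
  by_contra h
  push_neg at h
  have key : ∑ g : G, ((S.filter fun x => Bad x g).card : ℝ)
      = ∑ x ∈ S, ((univ.filter fun g : G => Bad x g).card : ℝ) := by
    simp_rw [Finset.card_filter]
    push_cast
    rw [Finset.sum_comm]
  have h1 : (Fintype.card G : ℝ) * (b * S.card)
      < ∑ g : G, ((S.filter fun x => Bad x g).card : ℝ) := by
    have := Finset.sum_lt_sum_of_nonempty (univ_nonempty : (univ : Finset G).Nonempty)
      (fun g _ => h g)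
    simpa [Finset.sum_const, nsmul_eq_mul, Finset.card_univ] using this
  have h2 : ∑ x ∈ S, ((univ.filter fun g : G => Bad x g).card : ℝ)
      ≤ S.card * (b * Fintype.card G) := by
    calc ∑ x ∈ S, ((univ.filter fun g : G => Bad x g).card : ℝ)
        ≤ ∑ x ∈ S, b * (Fintype.card G : ℝ) := Finset.sum_le_sum (fun x _ => hbad x)
      _ = S.card * (b * Fintype.card G) := by rw [Finset.sum_const, nsmul_eq_mul]
  rw [key] at h1
  have := h1.trans_le h2
  nlinarith [this]

lemma stmt4_cover {X G : Type*} [Fintype X] [Fintype G] [Nonempty G]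
    (Bad : X → G → Prop) [∀ x g, Decidable (Bad x g)]
    (b : ℝ) (hb0 : 0 < b)
    (hbad : ∀ x : X,
      ((univ.filter fun g : G => Bad x g).card : ℝ) ≤ b * (Fintype.card G : ℝ)) :
    ∀ n : ℕ, ∀ S : Finset X, (S.card : ℝ) < (1 / b) ^ n →
      ∃ gs : Fin n → G, ∀ x ∈ S, ∃ i, ¬ Bad x (gs i) := by
  intro n
  induction n with
  | zero =>
    intro S hS
    simp only [pow_zero] at hS
    have : S.card = 0 := by exact_mod_cast Nat.lt_one_iff.mp (by exact_mod_cast hS)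
    refine ⟨Fin.elim0, fun x hx => ?_⟩
    simp [Finset.card_eq_zero.mp this] at hx
  | succ n ih =>
    intro S hS
    obtain ⟨g, hg⟩ := stmt4_avg Bad b hbad S
    set S' := S.filter (fun x => Bad x g) with hS'
    have hcard : (S'.card : ℝ) < (1 / b) ^ n := by
      have hb' : b ≠ 0 := ne_of_gt hb0
      have : b * (S.card : ℝ) < b * ((1 / b) ^ (n + 1)) :=
        (mul_lt_mul_iff_right₀ hb0).mpr hS
      have heq : b * (1 / b) ^ (n + 1) = (1 / b) ^ n := by
        rw [pow_succ', ← mul_assoc, mul_one_div_cancel hb', one_mul]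
      calc (S'.card : ℝ) ≤ b * S.card := hg
        _ < b * ((1 / b) ^ (n + 1)) := (mul_lt_mul_iff_right₀ hb0).mpr hS
        _ = (1 / b) ^ n := heq
    obtain ⟨gs, hgs⟩ := ih S' hcard
    refine ⟨Fin.cons g gs, fun x hx => ?_⟩
    by_cases hxg : Bad x g
    · obtain ⟨i, hi⟩ := hgs x (Finset.mem_filter.mpr ⟨hx, hxg⟩)
      exact ⟨i.succ, by simpa using hi⟩
    · exact ⟨0, by simpa using hxg⟩

/-- Greedy hitting-set theorem: if `X` is a finite set with `|X| = B ≥ 1`, `G` a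
finite nonempty set, and for every `x ∈ X` at most `b·|G|` kernels `g` satisfy
`Bad x g` (with `0 < b < 1`), then there are `m ≤ ⌈log B / log (1/b)⌉ + 1`
kernels `g₁, …, g_m` such that every `x` has some `gᵢ` with `¬ Bad x gᵢ`. -/
theorem stmt4 {X G : Type*} [Fintype X] [Fintype G] [Nonempty G]
    (Bad : X → G → Prop) [∀ x g, Decidable (Bad x g)]
    (B : ℕ) (hB : B = Fintype.card X) (hB1 : 1 ≤ B)
    (b : ℝ) (hb0 : 0 < b) (hb1 : b < 1)
    (hbad : ∀ x : X,
      ((univ.filter fun g : G => Bad x g).card : ℝ) ≤ b * (Fintype.card G : ℝ)) :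
    ∃ (m : ℕ) (gs : Fin m → G),
      m ≤ ⌈Real.log B / Real.log (1 / b)⌉₊ + 1 ∧
      ∀ x : X, ∃ i : Fin m, ¬ Bad x (gs i) := by
  set n := ⌈Real.log B / Real.log (1 / b)⌉₊ + 1 with hn
  have hinv : (1 : ℝ) < 1 / b := (one_lt_div hb0).mpr hb1
  have hlog : 0 < Real.log (1 / b) := Real.log_pos hinv
  have hBpos : (0 : ℝ) < B := by exact_mod_cast hB1
  have hB1' : (1 : ℝ) ≤ B := by exact_mod_cast hB1
  have hlogB : 0 ≤ Real.log B := Real.log_nonneg hB1'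
  have hlt : Real.log B < n * Real.log (1 / b) := by
    have h1 : Real.log B / Real.log (1 / b) ≤ ⌈Real.log B / Real.log (1 / b)⌉₊ :=
      Nat.le_ceil _
    have h2 : Real.log B ≤ ⌈Real.log B / Real.log (1 / b)⌉₊ * Real.log (1 / b) := by
      rw [← div_le_iff₀ hlog] at *
      exact h1
    have : ((⌈Real.log B / Real.log (1 / b)⌉₊ : ℝ)) * Real.log (1 / b)
        < n * Real.log (1 / b) := by
      refine mul_lt_mul_of_pos_right ?_ hlog
      rw [hn]; push_cast; linarith
    linarith
  have hpow : (B : ℝ) < (1 / b) ^ n := by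
    have := (Real.log_lt_log_iff hBpos (pow_pos (show (0:ℝ) < 1/b by positivity) n)).mp
      (by rwa [Real.log_pow])
    exact this
  have hcard : ((univ : Finset X).card : ℝ) < (1 / b) ^ n := by
    rwa [Finset.card_univ, ← hB]
  obtain ⟨gs, hgs⟩ := stmt4_cover Bad b hb0 hbad n univ hcard
  exact ⟨n, gs, le_refl _, fun x => hgs x (mem_univ x)⟩
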